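/- Let X be a Banach lattice, (x_n) a sequence in X, and x ∈ X. Then (x_n) converges uniformly to x (i.e., there exists z ∈ X with z ≥ 0 such that for every m ≥ 1, |x_n − x| ≤ z/m for all but finitely many n) if and only if for every ε > 0 there exists k such that for all m ≥ k, ‖⋁_{n=k}^m |x_n − x|‖ < ε. -/

import Mathlib

open Filter Topology

section aux
variable {X : Type*} [NormedAddCommGroup X] [Lattice X] [HasSolidNorm X] [IsOrderedAddMonoid X]

lemma aux_pow2_semiclosed (k : ℕ) {a : X} (h : 0 ≤ 2 ^ k • a) : 0 ≤ a := by
  induction k with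
  | zero => simpa using h
  | succ k ih =>
    apply ih
    apply nsmul_two_semiclosed
    rw [← mul_smul, ← pow_succ']
    exact h

lemma aux_sup_nonneg (a : ℕ → X) (ha : ∀ n, 0 ≤ a n) {k m : ℕ} (h : k ≤ m) :
    0 ≤ (Finset.Icc k m).sup' (Finset.nonempty_Icc.mpr h) a :=
  (ha k).trans (Finset.le_sup' a (Finset.mem_Icc.mpr ⟨le_refl k, h⟩))

lemma aux_sup_mono_left (a : ℕ → X) {k k' m : ℕ} (h1 : k ≤ k') (h2 : k' ≤ m) :
    (Finset.Icc k' m).sup' (Finset.nonempty_Icc.mpr h2) a ≤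
      (Finset.Icc k m).sup' (Finset.nonempty_Icc.mpr (h1.trans h2)) a := by
  apply Finset.sup'_le
  intro n hn
  rw [Finset.mem_Icc] at hn
  exact Finset.le_sup' a (Finset.mem_Icc.mpr ⟨h1.trans hn.1, hn.2⟩)

lemma aux_sup_mono_right (a : ℕ → X) {k m m' : ℕ} (h2 : k ≤ m) (h3 : m ≤ m') :
    (Finset.Icc k m).sup' (Finset.nonempty_Icc.mpr h2) a ≤
      (Finset.Icc k m').sup' (Finset.nonempty_Icc.mpr (h2.trans h3)) a := by
  apply Finset.sup'_le
  intro n hn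
  rw [Finset.mem_Icc] at hn
  exact Finset.le_sup' a (Finset.mem_Icc.mpr ⟨hn.1, hn.2.trans h3⟩)

lemma aux_sup_split (a : ℕ → X) (ha : ∀ n, 0 ≤ a n) {k m m' : ℕ} (h1 : k ≤ m) (h2 : m < m') :
    (Finset.Icc k m').sup' (Finset.nonempty_Icc.mpr (h1.trans h2.le)) a ≤
      (Finset.Icc k m).sup' (Finset.nonempty_Icc.mpr h1) a +
        (Finset.Icc (m + 1) m').sup' (Finset.nonempty_Icc.mpr h2) a := by
  apply Finset.sup'_le
  intro n hn
  rw [Finset.mem_Icc] at hn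
  rcases le_or_gt n m with hnm | hnm
  · exact (Finset.le_sup' a (Finset.mem_Icc.mpr ⟨hn.1, hnm⟩)).trans
      (le_add_of_nonneg_right (aux_sup_nonneg a ha h2))
  · exact (Finset.le_sup' a (Finset.mem_Icc.mpr ⟨hnm, hn.2⟩)).trans
      (le_add_of_nonneg_left (aux_sup_nonneg a ha h1))

variable [NormedSpace ℝ X]

lemma aux_smul_nonneg {c : ℝ} (hc : 0 ≤ c) {v : X} (hv : 0 ≤ v) : 0 ≤ c • v := by
  set q : ℕ → ℝ := fun k => (⌈c * 2 ^ k⌉₊ : ℝ) / 2 ^ k with hq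
  have hpow : ∀ k : ℕ, (0:ℝ) < 2 ^ k := fun k => by positivity
  have hle : ∀ k, c ≤ q k := by
    intro k
    rw [hq, le_div_iff₀ (hpow k)]
    exact Nat.le_ceil _
  have hlt : ∀ k, q k < c + ((2:ℝ)⁻¹) ^ k := by
    intro k
    rw [hq, div_lt_iff₀ (hpow k), add_mul, inv_pow, inv_mul_cancel₀ (hpow k).ne']
    exact Nat.ceil_lt_add_one (by positivity)
  have htend : Tendsto q atTop (𝓝 c) := by
    have h2 : Tendsto (fun k : ℕ => c + ((2:ℝ)⁻¹) ^ k) atTop (𝓝 (c + 0)) :=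
      tendsto_const_nhds.add (tendsto_pow_atTop_nhds_zero_of_lt_one (by norm_num) (by norm_num))
    rw [add_zero] at h2
    exact tendsto_of_tendsto_of_tendsto_of_le_of_le tendsto_const_nhds h2 hle fun k => (hlt k).le
  have hterm : ∀ k, 0 ≤ q k • v := by
    intro k
    apply aux_pow2_semiclosed k
    have : (2 ^ k : ℕ) • (q k • v) = (⌈c * 2 ^ k⌉₊ : ℕ) • v := by
      rw [← Nat.cast_smul_eq_nsmul ℝ, ← Nat.cast_smul_eq_nsmul ℝ (⌈c * 2 ^ k⌉₊), smul_smul]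
      congr 1
      push_cast
      simp only [hq]
      field_simp [hq]
    rw [this]
    exact nsmul_nonneg hv _
  have hsv : Tendsto (fun k => q k • v) atTop (𝓝 (c • v)) := htend.smul_const v
  exact ge_of_tendsto' hsv hterm

lemma aux_smul_le_smul {c : ℝ} (hc : 0 ≤ c) {a b : X} (h : a ≤ b) : c • a ≤ c • b := by
  have := aux_smul_nonneg hc (sub_nonneg.mpr h)
  rwa [smul_sub, sub_nonneg] at this

lemma aux_key [CompleteSpace X] (a : ℕ → X) (ha : ∀ n, 0 ≤ a n)
    (h : ∀ ε : ℝ, 0 < ε → ∃ k : ℕ, ∀ m : ℕ, ∀ h : k ≤ m,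
      ‖(Finset.Icc k m).sup' (Finset.nonempty_Icc.mpr h) a‖ < ε) :
    ∀ ε : ℝ, 0 < ε → ∃ y : X, 0 ≤ y ∧ ‖y‖ ≤ ε ∧ ∀ᶠ n in atTop, a n ≤ y := by
  intro ε hε
  obtain ⟨k, hk⟩ := h ε hε
  set u : ℕ → X := fun m =>
    (Finset.Icc k (k + m)).sup' (Finset.nonempty_Icc.mpr (Nat.le_add_right k m)) a with hu
  have humono : ∀ {m m' : ℕ}, m ≤ m' → u m ≤ u m' := by
    intro m m' hmm
    exact aux_sup_mono_right a (Nat.le_add_right k m) (by omega)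
  have hcauchy : CauchySeq u := by
    rw [Metric.cauchySeq_iff']
    intro ε' hε'
    obtain ⟨k', hk'⟩ := h ε' hε'
    refine ⟨k', fun n hn => ?_⟩
    rcases eq_or_lt_of_le hn with rfl | hlt
    · simpa [dist_self] using hε'
    · have h1 : u k' ≤ u n := humono hn
      have hnn : 0 ≤ u n - u k' := sub_nonneg.mpr h1
      have hsplit := aux_sup_split a ha (Nat.le_add_right k k')
        (show k + k' < k + n by omega)
      have ht2 : (Finset.Icc (k + k' + 1) (k + n)).sup'
          (Finset.nonempty_Icc.mpr (by omega)) a ≤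
          (Finset.Icc k' (k + n)).sup' (Finset.nonempty_Icc.mpr (by omega)) a :=
        aux_sup_mono_left a (by omega) (by omega)
      have hub : u n - u k' ≤ (Finset.Icc k' (k + n)).sup'
          (Finset.nonempty_Icc.mpr (by omega)) a := by
        have : u n ≤ u k' + (Finset.Icc (k + k' + 1) (k + n)).sup'
            (Finset.nonempty_Icc.mpr (by omega)) a := hsplit
        have := sub_le_iff_le_add'.mpr this
        exact this.trans ht2
      rw [dist_eq_norm]
      have habs : |u n - u k'| ≤ |(Finset.Icc k' (k + n)).sup'
          (Finset.nonempty_Icc.mpr (by omega : k' ≤ k + n)) a| := by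
        rw [abs_of_nonneg hnn, abs_of_nonneg (aux_sup_nonneg a ha (by omega))]
        exact hub
      exact lt_of_le_of_lt (norm_le_norm_of_abs_le_abs habs) (hk' (k + n) (by omega))
  obtain ⟨y, hy⟩ := cauchySeq_tendsto_of_complete hcauchy
  refine ⟨y, ?_, ?_, ?_⟩
  · exact ge_of_tendsto' hy fun m => aux_sup_nonneg a ha (Nat.le_add_right k m)
  · exact le_of_tendsto' hy.norm fun m => (hk (k + m) (Nat.le_add_right k m)).le
  · filter_upwards [eventually_ge_atTop k] with n hn
    have h1 : a n ≤ u (n - k) :=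
      Finset.le_sup' a (Finset.mem_Icc.mpr ⟨hn, by omega⟩)
    have h2 : u (n - k) ≤ y :=
      ge_of_tendsto hy (eventually_atTop.mpr ⟨n - k, fun m' hm' => humono hm'⟩)
    exact h1.trans h2

end aux

/-- In a Banach lattice, uniform convergence of `(x n)` to `x₀` is equivalent to:
for every `ε > 0` there is `k` such that for all `m ≥ k`,
`‖⋁_{n=k}^m |x n − x₀|‖ < ε`. -/
theorem uniform_convergence_iff {X : Type*} [NormedAddCommGroup X] [Lattice X]
    [HasSolidNorm X] [IsOrderedAddMonoid X]
    [NormedSpace ℝ X] [CompleteSpace X] (x : ℕ → X) (x₀ : X) :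
    (∃ z : X, 0 ≤ z ∧ ∀ m : ℕ, 1 ≤ m →
        ∀ᶠ n in atTop, |x n - x₀| ≤ (m : ℝ)⁻¹ • z) ↔
      (∀ ε : ℝ, 0 < ε → ∃ k : ℕ, ∀ m : ℕ, ∀ h : k ≤ m,
        ‖(Finset.Icc k m).sup' (Finset.nonempty_Icc.mpr h) (fun n => |x n - x₀|)‖ < ε) := by
  set a : ℕ → X := fun n => |x n - x₀| with hadef
  have ha : ∀ n, 0 ≤ a n := fun n => abs_nonneg _
  constructor
  · rintro ⟨z, hz0, hz⟩ ε hε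
    obtain ⟨m, hm⟩ := exists_nat_gt (‖z‖ / ε)
    set M : ℕ := m + 1 with hMdef
    have hM1 : 1 ≤ M := by omega
    have hMpos : (0:ℝ) < (M : ℝ) := by positivity
    have hnorm : ‖(M:ℝ)⁻¹ • z‖ < ε := by
      rw [norm_smul, Real.norm_eq_abs, abs_of_nonneg (inv_nonneg.mpr hMpos.le),
        inv_mul_eq_div, div_lt_iff₀ hMpos]
      have h1 : ‖z‖ < (m : ℝ) * ε := by
        have := (div_lt_iff₀ hε).mp hm
        linarith
      have h2 : (m : ℝ) ≤ (M : ℝ) := by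
        rw [hMdef]; push_cast; linarith
      nlinarith
    obtain ⟨k, hk⟩ := eventually_atTop.mp (hz M hM1)
    refine ⟨k, fun m' h' => ?_⟩
    have hsup : (Finset.Icc k m').sup' (Finset.nonempty_Icc.mpr h') a ≤ (M:ℝ)⁻¹ • z :=
      Finset.sup'_le _ _ fun n hn => hk n (Finset.mem_Icc.mp hn).1
    have h0 : 0 ≤ (M:ℝ)⁻¹ • z := aux_smul_nonneg (inv_nonneg.mpr hMpos.le) hz0
    calc ‖(Finset.Icc k m').sup' (Finset.nonempty_Icc.mpr h') a‖
        ≤ ‖(M:ℝ)⁻¹ • z‖ := by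
          apply norm_le_norm_of_abs_le_abs
          rw [abs_of_nonneg (aux_sup_nonneg a ha h'), abs_of_nonneg h0]
          exact hsup
      _ < ε := hnorm
  · intro h
    have key := aux_key a ha h
    have hyj : ∀ j : ℕ, ∃ y : X, 0 ≤ y ∧ ‖y‖ ≤ (1/2:ℝ)^j ∧ ∀ᶠ n in atTop, a n ≤ y :=
      fun j => key _ (by positivity)
    choose y hy0 hyn hyev using hyj
    have hg : Summable (fun j : ℕ => (j : ℝ) * (1/2 : ℝ) ^ j) := by
      have h12 : ‖(1/2 : ℝ)‖ < 1 := by norm_num [Real.norm_eq_abs, abs_of_nonneg]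
      simpa using summable_pow_mul_geometric_of_norm_lt_one (R := ℝ) 1 h12
    have hbound : ∀ j : ℕ, ‖j • y j‖ ≤ (j : ℝ) * (1/2 : ℝ) ^ j := by
      intro j
      calc ‖j • y j‖ ≤ (j : ℝ) * ‖y j‖ := by
            simpa [nsmul_eq_mul] using (norm_nsmul_le : ‖j • y j‖ ≤ _)
        _ ≤ (j : ℝ) * (1/2 : ℝ) ^ j :=
            mul_le_mul_of_nonneg_left (hyn j) (Nat.cast_nonneg j)
    have hsumm : Summable (fun j => j • y j) :=
      Summable.of_norm_bounded hg hbound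
    set z : X := ∑' j, j • y j with hzdef
    refine ⟨z, tsum_nonneg (fun j => nsmul_nonneg (hy0 j) j), ?_⟩
    intro m hm
    filter_upwards [hyev m] with n hn
    have h1 : m • y m ≤ z := Summable.le_tsum hsumm m (fun j _ => nsmul_nonneg (hy0 j) j)
    have h2 : (m:ℝ) • y m ≤ z := by rwa [Nat.cast_smul_eq_nsmul]
    have h3 : (m:ℝ)⁻¹ • ((m:ℝ) • y m) ≤ (m:ℝ)⁻¹ • z :=
      aux_smul_le_smul (by positivity) h2
    have hm0 : (m:ℝ) ≠ 0 := Nat.cast_ne_zero.mpr (by omega)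
    rw [smul_smul, inv_mul_cancel₀ hm0, one_smul] at h3
    exact hn.trans h3
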